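/- arXiv:2506.05832 — 5 statements merged into one kernel-verified Lean document; each statement's English description precedes it below -/
import Mathlib

section
/- A property of executions is a safety property if and only if it is a closed set in the sequence ultrametric: for a type A and a set P ⊆ (ℕ → A), the following are equivalent: (i) for every s ∉ P there exists n : ℕ such that every sequence t : ℕ → A with t i = s i for all i ≤ n satisfies t ∉ P; (ii) P is closed with respect to d, i.e., every sequence s such that for all ε > 0 there exists t ∈ P with d s t < ε already belongs to P. -/
open scoped Classical in
/-- The ultrametric on infinite sequences: `d a b = 0` if `a = b`, and `d a b = 2^(-k)`
where `k` is the least index with `a k ≠ b k` otherwise. -/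
noncomputable def seqDist {A : Type*} (a b : ℕ → A) : ℝ :=
  if h : a = b then 0
  else (2 : ℝ) ^ (-(Nat.find (Function.ne_iff.mp h) : ℤ))

open scoped Classical in
lemma seqDist_lt_imp_agree {A : Type*} {s t : ℕ → A} {n : ℕ}
    (h : seqDist s t < (2 : ℝ) ^ (-(n : ℤ))) : ∀ i ≤ n, t i = s i := by
  intro i hi
  unfold seqDist at h
  split_ifs at h with heq
  · rw [heq]
  · have hk : n < Nat.find (Function.ne_iff.mp heq) := by
      by_contra hle
      push_neg at hle
      have : (2 : ℝ) ^ (-(n : ℤ)) ≤ (2 : ℝ) ^ (-(Nat.find (Function.ne_iff.mp heq) : ℤ)) := by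
        apply zpow_le_zpow_right₀ (by norm_num)
        omega
      linarith
    have := Nat.find_min (Function.ne_iff.mp heq) (lt_of_le_of_lt hi hk)
    simpa [eq_comm] using this

open scoped Classical in
lemma seqDist_lt_of_agree {A : Type*} {s t : ℕ → A} {n : ℕ}
    (h : ∀ i ≤ n, t i = s i) : seqDist s t < (2 : ℝ) ^ (-(n : ℤ)) := by
  unfold seqDist
  split_ifs with heq
  · positivity
  · apply zpow_lt_zpow_right₀ (by norm_num)
    have : n < Nat.find (Function.ne_iff.mp heq) := by
      by_contra hle
      push_neg at hle
      exact Nat.find_spec (Function.ne_iff.mp heq) (h _ hle).symm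
    omega

/-- A property of executions is a safety property iff it is a closed set in the
sequence ultrametric: (i) every execution outside `P` has a finite prefix none of
whose extensions belong to `P`, iff (ii) `P` contains all its limit points. -/
theorem safety_iff_closed {A : Type*} (P : Set (ℕ → A)) :
    (∀ s ∉ P, ∃ n : ℕ, ∀ t : ℕ → A, (∀ i ≤ n, t i = s i) → t ∉ P) ↔
    (∀ s : ℕ → A, (∀ ε > (0 : ℝ), ∃ t ∈ P, seqDist s t < ε) → s ∈ P) := by
  constructor
  · intro hsafe s hclose
    by_contra hs
    obtain ⟨n, hn⟩ := hsafe s hs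
    obtain ⟨t, htP, htd⟩ := hclose ((2 : ℝ) ^ (-(n : ℤ))) (by positivity)
    exact hn t (seqDist_lt_imp_agree htd) htP
  · intro hclosed s hs
    by_contra hno
    push_neg at hno
    apply hs
    apply hclosed
    intro ε hε
    obtain ⟨n, hn⟩ := exists_pow_lt_of_lt_one hε (by norm_num : (1 : ℝ) / 2 < 1)
    obtain ⟨t, hagree, htP⟩ := hno n
    have h2 : (2 : ℝ) ^ (-(n : ℤ)) < ε := by
      calc (2 : ℝ) ^ (-(n : ℤ)) = ((1 : ℝ) / 2) ^ n := by
            rw [zpow_neg, one_div, inv_pow]; norm_num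
        _ < ε := hn
    exact ⟨t, htP, (seqDist_lt_of_agree hagree).trans h2⟩
end

section
/- A well-founded initial UTxO set is disjoint from the outputs created by any transaction with nonempty inputs: let h : Tx → B be injective, let u₀ ⊆ OutputRef × O be well-founded, and let t : Tx satisfy inputs t ≠ ∅. Then u₀ ∩ mkOuts t = ∅. -/
/-- Output references spent by a transaction: keys of its inputs. -/
def getORefs {B O Tx : Type*} (inputs : Tx → Set ((B × ℕ) × O)) (t : Tx) :
    Set (B × ℕ) :=
  {r | ∃ o, (r, o) ∈ inputs t}

/-- UTxO entries created by a transaction: the `i`-th output of `t` keyed by `(h t, i)`. -/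
def mkOuts {B O Tx : Type*} (outputs : Tx → List O) (hsh : Tx → B) (t : Tx) :
    Set ((B × ℕ) × O) :=
  {p | ∃ i o, (outputs t)[i]? = some o ∧ p = ((hsh t, i), o)}

/-- A UTxO set is well-founded if the hash part of each of its keys comes from a
transaction with empty inputs. -/
def WellFoundedUTxO {B O Tx : Type*} (inputs : Tx → Set ((B × ℕ) × O)) (hsh : Tx → B)
    (u₀ : Set ((B × ℕ) × O)) : Prop :=
  ∀ b n o, ((b, n), o) ∈ u₀ → ∃ t₀ : Tx, hsh t₀ = b ∧ inputs t₀ = ∅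

/-- The valid-trace conditions at step `k`: nonempty inputs, inputs present in the
current state, and the UTxO update rule. -/
def ValidStep {B O Tx : Type*} (inputs : Tx → Set ((B × ℕ) × O))
    (outputs : Tx → List O) (hsh : Tx → B)
    (u : ℕ → Set ((B × ℕ) × O)) (t : ℕ → Tx) (k : ℕ) : Prop :=
  inputs (t k) ≠ ∅ ∧ inputs (t k) ⊆ u k ∧
    u (k + 1) = {p | p ∈ u k ∧ p.1 ∉ getORefs inputs (t k)} ∪ mkOuts outputs hsh (t k)

/-- A valid ledger trace: the valid-trace conditions hold at every step. -/
def ValidLedgerTrace {B O Tx : Type*} (inputs : Tx → Set ((B × ℕ) × O))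
    (outputs : Tx → List O) (hsh : Tx → B)
    (u : ℕ → Set ((B × ℕ) × O)) (t : ℕ → Tx) : Prop :=
  ∀ k, ValidStep inputs outputs hsh u t k

/-- A well-founded initial UTxO set is disjoint from the outputs created by any
transaction with nonempty inputs. -/
theorem wellFounded_disjoint_mkOuts {B O Tx : Type*}
    (inputs : Tx → Set ((B × ℕ) × O)) (outputs : Tx → List O) (hsh : Tx → B)
    (hinj : Function.Injective hsh)
    (u₀ : Set ((B × ℕ) × O)) (hwf : WellFoundedUTxO inputs hsh u₀)
    (t : Tx) (ht : inputs t ≠ ∅) :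
    u₀ ∩ mkOuts outputs hsh t = ∅ := by
  ext p
  simp only [Set.mem_inter_iff, Set.mem_empty_iff_false, iff_false, not_and]
  rintro hp ⟨i, o, _, rfl⟩
  obtain ⟨t₀, hh, hi⟩ := hwf _ _ _ hp
  exact ht (hinj hh ▸ hi)
end

section
/- Trivial update protection: let h : Tx → B be injective, and let (u, t) be a valid ledger trace (u : ℕ → Set (OutputRef × O), t : ℕ → Tx) whose initial state u 0 is well-founded. Then for all indices i < j, u i ≠ u j. -/
section Aux

variable {B O Tx : Type*}
    (inputs : Tx → Set ((B × ℕ) × O)) (outputs : Tx → List O) (hsh : Tx → B)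
    (u : ℕ → Set ((B × ℕ) × O)) (t : ℕ → Tx)

/-- Origin lemma: every key hash in `u k` comes from an empty-input tx or some `t m`, `m < k`. -/
lemma origin (htrace : ValidLedgerTrace inputs outputs hsh u t)
    (hwf : WellFoundedUTxO inputs hsh (u 0)) :
    ∀ k p, p ∈ u k →
      (∃ t₀ : Tx, hsh t₀ = p.1.1 ∧ inputs t₀ = ∅) ∨ ∃ m < k, hsh (t m) = p.1.1 := by
  intro k
  induction k with
  | zero =>
    intro p hp
    exact Or.inl (hwf p.1.1 p.1.2 p.2 hp)
  | succ k ih =>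
    intro p hp
    rw [(htrace k).2.2] at hp
    rcases hp with hp | hp
    · rcases ih p hp.1 with h | ⟨m, hm, h⟩
      · exact Or.inl h
      · exact Or.inr ⟨m, Nat.lt_succ_of_lt hm, h⟩
    · rcases hp with ⟨i, o, _, rfl⟩
      exact Or.inr ⟨k, Nat.lt_succ_self k, rfl⟩

/-- Re-entry lemma: an entry present later but absent earlier was created in between. -/
lemma reentry (htrace : ValidLedgerTrace inputs outputs hsh u t) :
    ∀ a b, a ≤ b → ∀ p, p ∈ u b → p ∉ u a →
      ∃ q, a ≤ q ∧ q < b ∧ hsh (t q) = p.1.1 := by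
  intro a b
  induction b with
  | zero => intro hab p hb ha; exact absurd hb (Nat.le_zero.mp hab ▸ ha)
  | succ c ih =>
    intro hab p hb ha
    rcases Nat.eq_or_lt_of_le hab with rfl | h
    · exact absurd hb ha
    · have hac : a ≤ c := Nat.lt_succ_iff.mp h
      rw [(htrace c).2.2] at hb
      rcases hb with hb | hb
      · rcases ih hac p hb.1 ha with ⟨q, h1, h2, h3⟩
        exact ⟨q, h1, Nat.lt_succ_of_lt h2, h3⟩
      · rcases hb with ⟨i, o, _, rfl⟩
        exact ⟨c, hac, Nat.lt_succ_self c, rfl⟩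

/-- Joint lemma: transactions never repeat, and never spend their own outputs. -/
lemma no_repeat_no_self (hinj : Function.Injective hsh)
    (htrace : ValidLedgerTrace inputs outputs hsh u t)
    (hwf : WellFoundedUTxO inputs hsh (u 0)) :
    ∀ k, (∀ m, m < k → t m ≠ t k) ∧ (∀ p ∈ inputs (t k), p.1.1 ≠ hsh (t k)) := by
  intro k
  induction k using Nat.strong_induction_on with
  | _ k ih =>
    -- helper: for m with B(m), inputs of t m are gone from u (m+1)
    have spent : ∀ m, (∀ p ∈ inputs (t m), p.1.1 ≠ hsh (t m)) →
        ∀ p ∈ inputs (t m), ∀ o', (p.1, o') ∉ u (m + 1) := by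
      intro m hB p hp o' ho'
      rw [(htrace m).2.2] at ho'
      rcases ho' with ho' | ho'
      · exact ho'.2 ⟨p.2, by simpa using hp⟩
      · rcases ho' with ⟨i, o, _, heq⟩
        have : p.1.1 = hsh (t m) := by
          have := congrArg (fun q => q.1.1) heq
          simpa using this
        exact hB p hp this
    have hE : ∀ m, m < k → t m ≠ t k := by
      intro m hm heq
      obtain ⟨p, hp⟩ := Set.nonempty_iff_ne_empty.mpr (htrace m).1
      have hpk : p ∈ inputs (t k) := heq ▸ hp
      have hpuk : p ∈ u k := (htrace k).2.1 hpk
      have hgone : p ∉ u (m + 1) := by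
        have := spent m (ih m hm).2 p hp p.2
        simpa using this
      have hle : m + 1 ≤ k := hm
      obtain ⟨q, hq1, hq2, hq3⟩ := reentry inputs outputs hsh u t htrace (m + 1) k hle p hpuk hgone
      rcases origin inputs outputs hsh u t htrace hwf m p ((htrace m).2.1 hp) with
        ⟨t₀, ht₀, hemp⟩ | ⟨m', hm', hm'h⟩
      · have : t₀ = t q := hinj (by rw [ht₀, hq3])
        exact (htrace q).1 (this ▸ hemp)
      · have : t m' = t q := hinj (by rw [hm'h, hq3])
        exact (ih q hq2).1 m' (by omega) this
    refine ⟨hE, ?_⟩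
    intro p hp hph
    have hpuk : p ∈ u k := (htrace k).2.1 hp
    rcases origin inputs outputs hsh u t htrace hwf k p hpuk with ⟨t₀, ht₀, hemp⟩ | ⟨m, hm, hmh⟩
    · have h2 : t₀ = t k := hinj (by rw [ht₀, hph])
      exact (htrace k).1 (h2 ▸ hemp)
    · have : t m = t k := hinj (by rw [hmh, hph])
      exact hE m hm this

end Aux

/-- Trivial update protection: along a valid ledger trace starting from a
well-founded initial state, no UTxO state can occur twice. -/
theorem trivial_update_protection {B O Tx : Type*}
    (inputs : Tx → Set ((B × ℕ) × O)) (outputs : Tx → List O) (hsh : Tx → B)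
    (hinj : Function.Injective hsh)
    (u : ℕ → Set ((B × ℕ) × O)) (t : ℕ → Tx)
    (htrace : ValidLedgerTrace inputs outputs hsh u t)
    (hwf : WellFoundedUTxO inputs hsh (u 0)) :
    ∀ i j : ℕ, i < j → u i ≠ u j := by
  intro i j hij heq
  obtain ⟨p, hp⟩ := Set.nonempty_iff_ne_empty.mpr (htrace i).1
  have hpui : p ∈ u i := (htrace i).2.1 hp
  have hpuj : p ∈ u j := heq ▸ hpui
  have hB := (no_repeat_no_self inputs outputs hsh u t hinj htrace hwf i).2
  have hgone : p ∉ u (i + 1) := by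
    intro h
    rw [(htrace i).2.2] at h
    rcases h with h | h
    · exact h.2 ⟨p.2, by simpa using hp⟩
    · rcases h with ⟨i', o, _, heq'⟩
      have : p.1.1 = hsh (t i) := by
        have := congrArg (fun q => q.1.1) heq'
        simpa using this
      exact hB p hp this
  obtain ⟨q, hq1, hq2, hq3⟩ := reentry inputs outputs hsh u t htrace (i + 1) j hij p hpuj hgone
  rcases origin inputs outputs hsh u t htrace hwf i p hpui with ⟨t₀, ht₀, hemp⟩ | ⟨m, hm, hmh⟩
  · have : t₀ = t q := hinj (by rw [ht₀, hq3])
    exact (htrace q).1 (this ▸ hemp)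
  · have : t m = t q := hinj (by rw [hmh, hq3])
    exact (no_repeat_no_self inputs outputs hsh u t hinj htrace hwf q).1 m
      (by omega) this
end

section
/- Created output sets along a valid trace are pairwise disjoint and disjoint from the initial state: let h : Tx → B be injective, and let (u, t) be a valid ledger trace whose initial state u 0 is well-founded. Then: (i) u 0 ∩ mkOuts (t l) = ∅ for every l; (ii) mkOuts (t l) ∩ mkOuts (t m) = ∅ for all l ≠ m; and (iii) mkOuts (t k) ∩ u k = ∅ for every k, so that u (k+1) is the disjoint union of { (r, o) ∈ u k | r ∉ getORefs (t k) } and mkOuts (t k). -/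
/-- Created output sets along a valid trace are pairwise disjoint and disjoint from
the initial state; consequently, each update is a disjoint union. -/
theorem created_outputs_disjoint {B O Tx : Type*}
    (inputs : Tx → Set ((B × ℕ) × O)) (outputs : Tx → List O) (hsh : Tx → B)
    (hinj : Function.Injective hsh)
    (u : ℕ → Set ((B × ℕ) × O)) (t : ℕ → Tx)
    (htrace : ValidLedgerTrace inputs outputs hsh u t)
    (hwf : WellFoundedUTxO inputs hsh (u 0)) :
    (∀ l : ℕ, u 0 ∩ mkOuts outputs hsh (t l) = ∅) ∧
    (∀ l m : ℕ, l ≠ m → mkOuts outputs hsh (t l) ∩ mkOuts outputs hsh (t m) = ∅) ∧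
    (∀ k : ℕ, mkOuts outputs hsh (t k) ∩ u k = ∅) ∧
    (∀ k : ℕ,
      u (k + 1) =
        {p | p ∈ u k ∧ p.1 ∉ getORefs inputs (t k)} ∪ mkOuts outputs hsh (t k) ∧
      {p | p ∈ u k ∧ p.1 ∉ getORefs inputs (t k)} ∩ mkOuts outputs hsh (t k) = ∅) := by
    -- membership in mkOuts determines the hash component of the key
  have hmk : ∀ (τ : Tx) (p : (B × ℕ) × O), p ∈ mkOuts outputs hsh τ → p.1.1 = hsh τ := by
    rintro τ p ⟨i, o, -, rfl⟩; rfl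
  -- invariant: every hash in u k comes from an empty-input tx or an earlier t j
  have hinv : ∀ k (p : (B × ℕ) × O), p ∈ u k →
      (∃ t₀ : Tx, hsh t₀ = p.1.1 ∧ inputs t₀ = ∅) ∨ ∃ j < k, p.1.1 = hsh (t j) := by
    intro k
    induction k with
    | zero =>
      intro p hp
      obtain ⟨t₀, h1, h2⟩ := hwf p.1.1 p.1.2 p.2 (by simpa using hp)
      exact Or.inl ⟨t₀, h1, h2⟩
    | succ k ih =>
      intro p hp
      rw [(htrace k).2.2] at hp
      rcases hp with ⟨hp, -⟩ | hp
      · rcases ih p hp with h | ⟨j, hj, hjh⟩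
        · exact Or.inl h
        · exact Or.inr ⟨j, Nat.lt_succ_of_lt hj, hjh⟩
      · exact Or.inr ⟨k, Nat.lt_succ_self k, hmk _ _ hp⟩
  -- crossing lemma
  have hcross : ∀ (r : B × ℕ) (a m : ℕ), a ≤ m → (∃ o, (r, o) ∈ u m) →
      ¬(∃ o, (r, o) ∈ u a) →
      ∃ j, a ≤ j ∧ j < m ∧ ¬(∃ o, (r, o) ∈ u j) ∧ (∃ o, (r, o) ∈ u (j + 1)) := by
    intro r a m
    induction m with
    | zero =>
      intro ha hm hna
      interval_cases a
      exact absurd hm hna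
    | succ m ih =>
      intro ha hm hna
      rcases Nat.lt_succ_iff_lt_or_eq.mp (Nat.lt_succ_of_le ha) with ha' | rfl
      · by_cases hum : ∃ o, (r, o) ∈ u m
        · obtain ⟨j, h1, h2, h3, h4⟩ := ih (Nat.lt_succ_iff.mp ha') hum hna
          exact ⟨j, h1, Nat.lt_succ_of_lt h2, h3, h4⟩
        · exact ⟨m, Nat.lt_succ_iff.mp ha', Nat.lt_succ_self m, hum, hm⟩
      · exact absurd hm hna
  -- hashes along the trace are pairwise distinct
  have hne : ∀ m l, l < m → hsh (t l) ≠ hsh (t m) := by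
    intro m
    induction m using Nat.strong_induction_on with
    | _ m ih =>
      intro l hlm heq
      have htau : t l = t m := hinj heq
      obtain ⟨⟨r, o⟩, hro⟩ := Set.nonempty_iff_ne_empty.mpr (htrace l).1
      have hrl : (r, o) ∈ u l := (htrace l).2.1 hro
      have hrm : (r, o) ∈ u m := (htrace m).2.1 (by rw [← htau]; exact hro)
      -- r.1 is never the hash of any t j with l ≤ j < m
      have key : ∀ j, l ≤ j → j < m → r.1 ≠ hsh (t j) := by
        intro j hlj hjm hrj
        rcases hinv l (r, o) hrl with ⟨t₀, h1, h2⟩ | ⟨i, hil, hih⟩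
        · have : t₀ = t j := hinj (h1.trans hrj)
          exact (htrace j).1 (this ▸ h2)
        · exact ih j hjm i (lt_of_lt_of_le hil hlj) (hih ▸ hrj)
      -- r is not in u (l+1)
      have hnot : ¬∃ o', (r, o') ∈ u (l + 1) := by
        rintro ⟨o', ho'⟩
        rw [(htrace l).2.2] at ho'
        rcases ho' with ⟨-, hno⟩ | ho'
        · exact hno ⟨o, hro⟩
        · exact key l le_rfl hlm (hmk _ _ ho')
      obtain ⟨j, h1, h2, h3, h4⟩ := hcross r (l + 1) m hlm ⟨o, hrm⟩ hnot
      obtain ⟨o'', ho''⟩ := h4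
      rw [(htrace j).2.2] at ho''
      rcases ho'' with ⟨hin, -⟩ | ho''
      · exact h3 ⟨o'', hin⟩
      · exact key j (le_of_lt h1) h2 (hmk _ _ ho'')
  -- the four claims
  have claim3 : ∀ k : ℕ, mkOuts outputs hsh (t k) ∩ u k = ∅ := by
    intro k
    rw [Set.eq_empty_iff_forall_notMem]
    rintro p ⟨hp1, hp2⟩
    rcases hinv k p hp2 with ⟨t₀, h1, h2⟩ | ⟨j, hj, hjh⟩
    · exact (htrace k).1 (hinj (h1.trans (hmk _ _ hp1)) ▸ h2)
    · exact hne k j hj (hjh.symm.trans (hmk _ _ hp1))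
  refine ⟨?_, ?_, claim3, ?_⟩
  · intro l
    rw [Set.eq_empty_iff_forall_notMem]
    rintro p ⟨hp0, hpl⟩
    obtain ⟨t₀, h1, h2⟩ := hwf p.1.1 p.1.2 p.2 (by simpa using hp0)
    exact (htrace l).1 (hinj (h1.trans (hmk _ _ hpl)) ▸ h2)
  · intro l m hlm
    rw [Set.eq_empty_iff_forall_notMem]
    rintro p ⟨hpl, hpm⟩
    have : hsh (t l) = hsh (t m) := (hmk _ _ hpl).symm.trans (hmk _ _ hpm)
    rcases Nat.lt_or_ge l m with h | h
    · exact hne m l h this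
    · exact hne l m (lt_of_le_of_ne h (Ne.symm hlm)) this.symm
  · intro k
    refine ⟨(htrace k).2.2, ?_⟩
    rw [Set.eq_empty_iff_forall_notMem]
    rintro p ⟨⟨hp1, -⟩, hp2⟩
    exact Set.eq_empty_iff_forall_notMem.mp (claim3 k) p ⟨hp2, hp1⟩
end

section
/- Final-state formula for a valid finite trace: let h : Tx → B be injective, let (u, t) be a valid ledger trace whose initial state u 0 is well-founded, and let n : ℕ. Then u (n+1) = { (r, o) ∈ u 0 ∪ ⋃_{i ≤ n} mkOuts (t i) | r ∉ ⋃_{i ≤ n} getORefs (t i) }; that is, the state after applying t 0, …, t n equals the initial state together with all created outputs, minus all entries whose keys were spent by some transaction in the sequence. -/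
private lemma biUnion_le_succ' {α : Type*} (s : ℕ → Set α) (k : ℕ) :
    ⋃ i ≤ k + 1, s i = (⋃ i ≤ k, s i) ∪ s (k + 1) := by
  ext x
  simp only [Set.mem_iUnion, Set.mem_union]
  constructor
  · rintro ⟨i, hi, hx⟩
    rcases Nat.lt_succ_iff_lt_or_eq.1 (Nat.lt_succ_of_le hi) with h | rfl
    · exact Or.inl ⟨i, Nat.lt_succ_iff.1 h, hx⟩
    · exact Or.inr hx
  · rintro (⟨i, hi, hx⟩ | hx)
    · exact ⟨i, le_trans hi (Nat.le_succ k), hx⟩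
    · exact ⟨k + 1, le_refl _, hx⟩

private lemma biUnion_le_zero' {α : Type*} (s : ℕ → Set α) : ⋃ i ≤ 0, s i = s 0 := by
  ext x; simp

/-- Final-state formula for a valid finite trace: the state after applying
`t 0, …, t n` equals the initial state together with all created outputs, minus all
entries whose keys were spent by some transaction in the sequence. -/
theorem final_state_formula {B O Tx : Type*}
    (inputs : Tx → Set ((B × ℕ) × O)) (outputs : Tx → List O) (hsh : Tx → B)
    (hinj : Function.Injective hsh)
    (u : ℕ → Set ((B × ℕ) × O)) (t : ℕ → Tx)
    (htrace : ValidLedgerTrace inputs outputs hsh u t)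
    (hwf : WellFoundedUTxO inputs hsh (u 0)) (n : ℕ) :
    u (n + 1) =
      {p | (p ∈ u 0 ∪ ⋃ i ≤ n, mkOuts outputs hsh (t i)) ∧
           p.1 ∉ ⋃ i ≤ n, getORefs inputs (t i)} := by
  induction n using Nat.strong_induction_on with
  | _ n IH =>
    obtain ⟨hne, hsub, hstep⟩ := htrace n
    -- no output-key of `t n` appears in any state `u j` with `j ≤ n`
    have key : ∀ j ≤ n, ∀ i (o' : O), ((hsh (t n), i), o') ∉ u j := by
      intro j hj i o' hin
      match j, hj with
      | 0, _ =>
        obtain ⟨t₀, ht₀, hinp⟩ := hwf _ _ _ hin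
        exact (htrace n).1 (hinj ht₀ ▸ hinp)
      | (l+1), hj =>
        rw [IH l (lt_of_lt_of_le (Nat.lt_succ_self l) hj)] at hin
        obtain ⟨hmem, -⟩ := hin
        rcases hmem with h0 | hmk
        · obtain ⟨t₀, ht₀, hinp⟩ := hwf _ _ _ h0
          exact (htrace n).1 (hinj ht₀ ▸ hinp)
        · rw [Set.mem_iUnion₂] at hmk
          obtain ⟨m, hm, i', o'', hget, heq⟩ := hmk
          have hhm : hsh (t n) = hsh (t m) := congrArg (fun p => p.1.1) heq
          have hmn : t n = t m := hinj hhm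
          obtain ⟨c, rfl⟩ := Nat.exists_eq_add_of_le hj
          obtain ⟨q, hq⟩ := Set.nonempty_iff_ne_empty.2 (htrace (l + 1 + c)).1
          have hqu : q ∈ u (l + 1 + c) := (htrace (l + 1 + c)).2.1 hq
          have hlc : l + 1 + c = (l + c) + 1 := by omega
          rw [hlc] at hqu
          rw [IH (l + c) (by omega)] at hqu
          refine hqu.2 ?_
          rw [Set.mem_iUnion₂]
          refine ⟨m, by omega, ?_⟩
          exact ⟨q.2, by rw [← hmn]; exact hq⟩
    -- the outputs of `t n` are never spent by any `t j`, `j ≤ n`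
    have hclaim : ∀ p ∈ mkOuts outputs hsh (t n), ∀ j ≤ n,
        p.1 ∉ getORefs inputs (t j) := by
      rintro p ⟨i, o', hget, rfl⟩ j hj ⟨o'', ho''⟩
      exact key j hj i o'' ((htrace j).2.1 ho'')
    cases n with
    | zero =>
      ext p
      rw [hstep]
      simp only [Set.mem_union, Set.mem_setOf_eq, biUnion_le_zero']
      constructor
      · rintro (⟨h1, h2⟩ | h1)
        · exact ⟨Or.inl h1, h2⟩
        · exact ⟨Or.inr h1, hclaim p h1 0 le_rfl⟩
      · rintro ⟨h1 | h1, h2⟩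
        · exact Or.inl ⟨h1, h2⟩
        · exact Or.inr h1
    | succ k =>
      ext p
      rw [hstep, IH k (Nat.lt_succ_self k)]
      simp only [Set.mem_union, Set.mem_setOf_eq, biUnion_le_succ']
      constructor
      · rintro (⟨⟨h1, h2⟩, h3⟩ | h1)
        · refine ⟨?_, ?_⟩
          · rcases h1 with h | h
            · exact Or.inl h
            · exact Or.inr (Or.inl h)
          · rintro (h | h)
            · exact h2 h
            · exact h3 h
        · refine ⟨Or.inr (Or.inr h1), ?_⟩
          rintro (h | h)
          · rw [Set.mem_iUnion₂] at h
            obtain ⟨j, hj, hjh⟩ := h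
            exact hclaim p h1 j (le_trans hj (Nat.le_succ k)) hjh
          · exact hclaim p h1 (k + 1) le_rfl h
      · rintro ⟨h1 | h1 | h1, h2⟩
        · exact Or.inl ⟨⟨Or.inl h1, fun h => h2 (Or.inl h)⟩, fun h => h2 (Or.inr h)⟩
        · exact Or.inl ⟨⟨Or.inr h1, fun h => h2 (Or.inl h)⟩, fun h => h2 (Or.inr h)⟩
        · exact Or.inr h1
end
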